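/- Let E ↪ H be Hilbert spaces as above, S a dense subspace of E, Φ ∈ C²(E,R) such that for all w ∈ S the maps u ↦ Φ′(u)(w) and u ↦ Φ″(u)[w,w] are weakly sequentially continuous, and these derivatives pass to limits uniformly on bounded sets along dense approximations. Let {u_n} ⊂ S_μ be bounded with Φ′(u_n) + λ_n(u_n,·)_H → 0 in E′ (λ_n = −(1/|u_n|²)Φ′(u_n)u_n), u_n ⇀ u ≠ 0 in E, and suppose there exist ζ_n → 0⁺ with approximate Morse index m̃_{ζ_n}(u_n) ≤ M. Then the Morse index of u as a constrained critical point satisfies m̃_0(u) ≤ M, i.e., every subspace W ⊂ T_u S_{|u|²} on which D²Φ(u) is negative definite has dim W ≤ M. -/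

import Mathlib

open Filter Topology
open scoped RealInnerProductSpace

/-- interchange of limits -/
lemma aux_interchange (x : ℕ → ℕ → ℝ) (xi : ℕ → ℝ) (y : ℕ → ℝ) (yi : ℝ)
    (h1 : ∀ m, Tendsto (fun n => x n m) atTop (nhds (y m)))
    (h2 : ∀ ε > (0:ℝ), ∀ᶠ m in atTop, ∀ n, |x n m - xi n| < ε)
    (h3 : Tendsto y atTop (nhds yi)) :
    Tendsto xi atTop (nhds yi) := by
  rw [Metric.tendsto_atTop]
  intro ε hε
  have h3' := (Metric.tendsto_atTop.1 h3) (ε/3) (by linarith)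
  obtain ⟨m, hm1, hm2⟩ := ((h2 (ε/3) (by linarith)).and (eventually_atTop.2 h3')).exists
  have h1' := (Metric.tendsto_atTop.1 (h1 m)) (ε/3) (by linarith)
  obtain ⟨N, hN⟩ := h1'
  refine ⟨N, fun n hn => ?_⟩
  have a1 := hm1 n
  have a2 := hN n hn
  have a3 := hm2
  rw [Real.dist_eq] at a2 a3 ⊢
  have : xi n - yi = -(x n m - xi n) + (x n m - y m) + (y m - yi) := by ring
  rw [this]
  calc |(-(x n m - xi n) + (x n m - y m) + (y m - yi))|
      ≤ |(-(x n m - xi n) + (x n m - y m))| + |y m - yi| := abs_add_le _ _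
    _ ≤ |(-(x n m - xi n))| + |x n m - y m| + |y m - yi| := by
        gcongr; exact abs_add_le _ _
    _ < ε/3 + ε/3 + ε/3 := by rw [abs_neg]; gcongr
    _ = ε := by ring

/-- uniform smallness on a compact set from pointwise convergence and uniform Lipschitz bound -/
lemma aux_unif {E : Type*} [NormedAddCommGroup E] {K : Set E} (hK : IsCompact K)
    (g : ℕ → E → ℝ) (L : ℝ)
    (hLip : ∀ n, ∀ x ∈ K, ∀ y ∈ K, |g n x - g n y| ≤ L * ‖x - y‖)
    (hpt : ∀ x ∈ K, Tendsto (fun n => g n x) atTop (nhds 0)) :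
    ∀ ε > (0:ℝ), ∀ᶠ n in atTop, ∀ x ∈ K, |g n x| < ε := by
  intro ε hε
  set L' : ℝ := max L 1 with hL'
  have hL'pos : 0 < L' := lt_of_lt_of_le one_pos (le_max_right _ _)
  set δ : ℝ := ε / (3 * L') with hδ
  have hδpos : 0 < δ := by positivity
  obtain ⟨t, htK, htcov⟩ := hK.elim_nhds_subcover (fun x => Metric.ball x δ)
    (fun x _ => Metric.ball_mem_nhds x hδpos)
  have hev : ∀ᶠ n in atTop, ∀ c ∈ t, |g n c| < ε / 3 := by
    rw [eventually_all_finset]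
    intro c hc
    have := hpt c (htK c hc)
    have := (Metric.tendsto_atTop.1 this) (ε/3) (by linarith)
    obtain ⟨N, hN⟩ := this
    refine eventually_atTop.2 ⟨N, fun n hn => ?_⟩
    have := hN n hn
    simpa [Real.dist_eq] using this
  filter_upwards [hev] with n hn x hx
  obtain ⟨c, hct, hxc⟩ := Set.mem_iUnion₂.1 (htcov hx)
  have h1 : |g n x - g n c| ≤ L * ‖x - c‖ := hLip n x hx c (htK c hct)
  have h2 : ‖x - c‖ < δ := by
    rw [← dist_eq_norm]; exact Metric.mem_ball.1 hxc
  have h3 : |g n c| < ε / 3 := hn c hct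
  have h4 : L * ‖x - c‖ ≤ L' * δ := by
    have : L * ‖x - c‖ ≤ L' * ‖x - c‖ := by
      apply mul_le_mul_of_nonneg_right (le_max_left _ _) (norm_nonneg _)
    calc L * ‖x-c‖ ≤ L' * ‖x - c‖ := this
      _ ≤ L' * δ := by gcongr
  have h5 : L' * δ = ε/3 := by
    rw [hδ, mul_div_assoc', div_eq_div_iff (mul_ne_zero three_ne_zero hL'pos.ne') three_ne_zero]; ring
  calc |g n x| ≤ |g n x - g n c| + |g n c| := by
        have := abs_add_le (g n x - g n c) (g n c); simpa using this
    _ < ε/3 + ε/3 := add_lt_add_of_le_of_lt (h1.trans (h4.trans_eq h5)) h3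
    _ < ε := by linarith

/-- difference of quadratic values of a bilinear form -/
lemma aux_bil_diff {E : Type*} [NormedAddCommGroup E] [NormedSpace ℝ E]
    (B : E →L[ℝ] E →L[ℝ] ℝ) (x y : E) :
    |B x x - B y y| ≤ ‖B‖ * ‖x - y‖ * (‖x‖ + ‖y‖) := by
  have hid : B x x - B y y = B x (x - y) + B (x - y) y := by
    simp only [map_sub, ContinuousLinearMap.sub_apply]
    ring
  rw [hid]
  calc |B x (x-y) + B (x-y) y| ≤ |B x (x-y)| + |B (x-y) y| := abs_add_le _ _
    _ ≤ ‖B‖ * ‖x‖ * ‖x-y‖ + ‖B‖ * ‖x-y‖ * ‖y‖ := by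
        gcongr
        · exact B.le_opNorm₂ x (x-y)
        · exact B.le_opNorm₂ (x-y) y
    _ = ‖B‖ * ‖x - y‖ * (‖x‖ + ‖y‖) := by ring

/-- difference of squared norms -/
lemma aux_normsq_diff {H : Type*} [NormedAddCommGroup H] (a b : H) :
    |‖a‖^2 - ‖b‖^2| ≤ ‖a - b‖ * (‖a‖ + ‖b‖) := by
  have h1 : ‖a‖^2 - ‖b‖^2 = (‖a‖ - ‖b‖) * (‖a‖ + ‖b‖) := by ring
  rw [h1, abs_mul]
  have h2 : |‖a‖ - ‖b‖| ≤ ‖a - b‖ := abs_norm_sub_norm_le a b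
  have h3 : |‖a‖ + ‖b‖| = ‖a‖ + ‖b‖ := abs_of_nonneg (by positivity)
  rw [h3]
  exact mul_le_mul_of_nonneg_right h2 (by positivity)

lemma aux_h11 {x : ℝ} (h0 : 0 ≤ x) (hh : x ≤ 1/2) : x*(2+x) ≤ 3*x := by nlinarith

lemma aux_combine {Aψ Av Lψ Lv Z C Cl X θ : ℝ}
    (h1 : Aψ - Av ≤ C * X) (h2 : Lψ - Lv ≤ Cl * X) (h3 : Z ≤ θ/16 * (3/2)^2)
    (h4 : Av + Lv ≤ -θ + θ/8) (h5 : (C+Cl)*X ≤ θ/4) (hθ : 0 < θ) :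
    Aψ + Lψ + Z < 0 := by linarith

lemma aux_scale {s A l z b c : ℝ} (hs : 0 < s^2) (h : A + l*b + z*c < 0) :
    s^2*A + l*(s^2*b) < -z*(s^2*c) := by nlinarith [mul_neg_of_pos_of_neg hs h]

set_option maxHeartbeats 1000000 in
theorem stmt7 {E H : Type*}
    [NormedAddCommGroup E] [InnerProductSpace ℝ E] [CompleteSpace E]
    [NormedAddCommGroup H] [InnerProductSpace ℝ H] [CompleteSpace H]
    (ι : E →L[ℝ] H) (hι : Function.Injective ι) (hdense : DenseRange ι) (hnorm : ‖ι‖ ≤ 1)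
    (S : Submodule ℝ E) (hSdense : Dense (S : Set E))
    (Φ : E → ℝ) (hΦ : ContDiff ℝ 2 Φ)
    -- weak sequential continuity of Φ'(·)(w) and Φ''(·)[w,w] for w ∈ S
    (hC1 : ∀ w ∈ S, ∀ (v : ℕ → E) (v0 : E),
      (∀ f : E →L[ℝ] ℝ, Tendsto (fun n => f (v n)) atTop (nhds (f v0))) →
      Tendsto (fun n => fderiv ℝ Φ (v n) w) atTop (nhds (fderiv ℝ Φ v0 w)))
    (hC2 : ∀ w ∈ S, ∀ (v : ℕ → E) (v0 : E),
      (∀ f : E →L[ℝ] ℝ, Tendsto (fun n => f (v n)) atTop (nhds (f v0))) →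
      Tendsto (fun n => iteratedFDeriv ℝ 2 Φ (v n) ![w, w]) atTop
        (nhds (iteratedFDeriv ℝ 2 Φ v0 ![w, w])))
    -- uniform convergence on bounded sets along dense approximations
    (hU1 : ∀ (w : E) (ws : ℕ → E), (∀ m, ws m ∈ S) → Tendsto ws atTop (nhds w) →
      ∀ R > (0:ℝ), TendstoUniformlyOn (fun m v => fderiv ℝ Φ v (ws m))
        (fun v => fderiv ℝ Φ v w) atTop {v : E | ‖v‖ ≤ R})
    (hU2 : ∀ (w : E) (ws : ℕ → E), (∀ m, ws m ∈ S) → Tendsto ws atTop (nhds w) →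
      ∀ R > (0:ℝ), TendstoUniformlyOn (fun m v => iteratedFDeriv ℝ 2 Φ v ![ws m, ws m])
        (fun v => iteratedFDeriv ℝ 2 Φ v ![w, w]) atTop {v : E | ‖v‖ ≤ R})
    (μ : ℝ) (hμ : 0 < μ) (u : ℕ → E) (hS : ∀ n, ‖ι (u n)‖ ^ 2 = μ)
    (M0 : ℝ) (hbdd : ∀ n, ‖u n‖ ≤ M0)
    (lam : ℕ → ℝ) (hlam : ∀ n, lam n = -(1 / ‖ι (u n)‖ ^ 2) * fderiv ℝ Φ (u n) (u n))
    (hPS : Tendsto (fun n => ‖fderiv ℝ Φ (u n) + lam n • ((innerSL ℝ (ι (u n))).comp ι)‖)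
      atTop (nhds 0))
    (u0 : E) (hu0 : u0 ≠ 0)
    (hweak : ∀ f : E →L[ℝ] ℝ, Tendsto (fun n => f (u n)) atTop (nhds (f u0)))
    (ζ : ℕ → ℝ) (hζpos : ∀ n, 0 < ζ n) (hζ : Tendsto ζ atTop (nhds 0))
    (M : ℕ)
    (hMorse : ∀ n, ∀ W : Submodule ℝ E,
      (∀ φ ∈ W, ⟪ι (u n), ι φ⟫ = 0) →
      (∀ φ ∈ W, φ ≠ 0 →
        iteratedFDeriv ℝ 2 Φ (u n) ![φ, φ] + lam n * ‖ι φ‖ ^ 2 < -(ζ n) * ‖φ‖ ^ 2) →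
      Module.rank ℝ W ≤ M) :
    ∀ W : Submodule ℝ E,
      (∀ φ ∈ W, ⟪ι u0, ι φ⟫ = 0) →
      (∀ φ ∈ W, φ ≠ 0 →
        iteratedFDeriv ℝ 2 Φ u0 ![φ, φ]
          - (fderiv ℝ Φ u0 u0 / ‖ι u0‖ ^ 2) * ⟪ι φ, ι φ⟫ < 0) →
      Module.rank ℝ W ≤ M := by
  classical
  intro W hW1 hW2
  by_contra hrank
  push_neg at hrank
  -- basic setup
  set D1 : E → (E →L[ℝ] ℝ) := fderiv ℝ Φ with hD1
  set A : E → (E →L[ℝ] E →L[ℝ] ℝ) := fderiv ℝ (fderiv ℝ Φ) with hA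
  have hbridge : ∀ x w w', iteratedFDeriv ℝ 2 Φ x ![w, w'] = A x w w' := by
    intro x w w'
    rw [iteratedFDeriv_two_apply]
    simp [hA]
  have hdiff1 : Differentiable ℝ Φ := hΦ.differentiable two_ne_zero
  have hdiff2 : Differentiable ℝ (fderiv ℝ Φ) :=
    (hΦ.fderiv_right (le_refl 2)).differentiable one_ne_zero
  have hsymm : ∀ x v w, A x v w = A x w v := fun x v w =>
    second_derivative_symmetric (fun y => (hdiff1 y).hasFDerivAt) ((hdiff2 x).hasFDerivAt) v w
  -- positivity facts
  have hιu0 : ι u0 ≠ 0 := fun h => hu0 (hι (by simpa using h))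
  have hc : (0:ℝ) < ‖ι u0‖^2 := by
    have := norm_pos_iff.mpr hιu0
    positivity
  have hM0pos : 0 < M0 := by
    have h1 : ‖ι (u 0)‖ ≤ ‖u 0‖ := by
      calc ‖ι (u 0)‖ ≤ ‖ι‖ * ‖u 0‖ := ι.le_opNorm _
        _ ≤ 1 * ‖u 0‖ := by gcongr
        _ = ‖u 0‖ := one_mul _
    have h2 : 0 < ‖ι (u 0)‖ := by
      have := hS 0
      nlinarith [norm_nonneg (ι (u 0))]
    exact lt_of_lt_of_le h2 (h1.trans (hbdd 0))
  have hιle : ∀ v : E, ‖ι v‖ ≤ ‖v‖ := by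
    intro v
    calc ‖ι v‖ ≤ ‖ι‖ * ‖v‖ := ι.le_opNorm _
      _ ≤ 1 * ‖v‖ := by gcongr
      _ = ‖v‖ := one_mul _
  -- the finite-dimensional negative subspace W0 ≤ W of dimension M+1
  obtain ⟨f, hf⟩ : ∃ f : Fin (M+1) → W, LinearIndependent ℝ f := by
    apply exists_linearIndependent_of_le_rank
    exact_mod_cast Cardinal.natCast_add_one_le_iff.mpr hrank
  have hfE : LinearIndependent ℝ (fun i => ((f i : E))) := hf.map' W.subtype W.ker_subtype
  set W0 : Submodule ℝ E := Submodule.span ℝ (Set.range fun i => (f i : E)) with hW0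
  have hW0W : W0 ≤ W := Submodule.span_le.mpr (by rintro x ⟨i, rfl⟩; exact (f i).2)
  haveI hfin : FiniteDimensional ℝ W0 := FiniteDimensional.span_of_finite ℝ (Set.finite_range _)
  have hrank0 : Module.finrank ℝ W0 = M+1 := by
    rw [hW0, finrank_span_eq_card hfE, Fintype.card_fin]
  -- pointwise limits for all w : E
  have hseq : ∀ w : E, ∃ ws : ℕ → E, (∀ m, ws m ∈ S) ∧ Tendsto ws atTop (nhds w) := fun w =>
    mem_closure_iff_seq_limit.1 (hSdense w)
  have key1 : ∀ w : E, Tendsto (fun n => D1 (u n) w) atTop (nhds (D1 u0 w)) := by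
    intro w
    obtain ⟨ws, hwsS, hws⟩ := hseq w
    have hUw := hU1 w ws hwsS hws M0 hM0pos
    apply aux_interchange (fun n m => D1 (u n) (ws m)) _ (fun m => D1 u0 (ws m))
    · intro m
      exact hC1 (ws m) (hwsS m) u u0 hweak
    · intro ε hε
      have := (Metric.tendstoUniformlyOn_iff.1 hUw) ε hε
      filter_upwards [this] with m hm k
      have h2 := hm (u k) (by simpa using hbdd k)
      rw [Real.dist_eq] at h2
      rw [abs_sub_comm] at h2
      exact h2
    · exact ((D1 u0).continuous.tendsto w).comp hws
  have key2 : ∀ w : E, Tendsto (fun n => A (u n) w w) atTop (nhds (A u0 w w)) := by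
    intro w
    obtain ⟨ws, hwsS, hws⟩ := hseq w
    have hUw := hU2 w ws hwsS hws M0 hM0pos
    apply aux_interchange (fun n m => iteratedFDeriv ℝ 2 Φ (u n) ![ws m, ws m]) _
      (fun m => A u0 (ws m) (ws m))
    · intro m
      have := hC2 (ws m) (hwsS m) u u0 hweak
      simpa [hbridge] using this
    · intro ε hε
      have := (Metric.tendstoUniformlyOn_iff.1 hUw) ε hε
      filter_upwards [this] with m hm k
      have h2 := hm (u k) (by simpa using hbdd k)
      rw [Real.dist_eq] at h2
      rw [abs_sub_comm] at h2
      rw [hbridge (u k) w w] at h2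
      exact h2
    · have hcont : Continuous fun v : E => A u0 v v := (A u0).continuous.clm_apply continuous_id
      exact (hcont.tendsto w).comp hws
  -- limit of the multipliers
  set lam0 : ℝ := -(D1 u0 u0) / ‖ι u0‖^2 with hlam0
  have hPSu0 : Tendsto (fun k => D1 (u k) u0 + lam k * (inner ℝ (ι (u k)) (ι u0) : ℝ))
      atTop (nhds 0) := by
    apply squeeze_zero_norm (a := fun k =>
      ‖fderiv ℝ Φ (u k) + lam k • ((innerSL ℝ (ι (u k))).comp ι)‖ * ‖u0‖)
    · intro k
      have heq : D1 (u k) u0 + lam k * (inner ℝ (ι (u k)) (ι u0) : ℝ)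
          = (fderiv ℝ Φ (u k) + lam k • ((innerSL ℝ (ι (u k))).comp ι)) u0 := by
        simp [hD1, ContinuousLinearMap.add_apply, ContinuousLinearMap.smul_apply,
          ContinuousLinearMap.comp_apply, innerSL_apply_apply, smul_eq_mul]
      rw [heq]
      exact (fderiv ℝ Φ (u k) + lam k • ((innerSL ℝ (ι (u k))).comp ι)).le_opNorm u0
    · have := hPS.mul_const ‖u0‖
      simpa using this
  have hinner0 : Tendsto (fun k => (inner ℝ (ι (u k)) (ι u0) : ℝ)) atTop (nhds (‖ι u0‖^2)) := by
    have h1 := hweak ((innerSL ℝ (ι u0)).comp ι)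
    simp only [ContinuousLinearMap.comp_apply, innerSL_apply_apply] at h1
    have h2 : ∀ k, (inner ℝ (ι u0) (ι (u k)) : ℝ) = (inner ℝ (ι (u k)) (ι u0) : ℝ) := fun k =>
      real_inner_comm _ _
    rw [show (inner ℝ (ι u0) (ι u0) : ℝ) = ‖ι u0‖^2 from real_inner_self_eq_norm_sq _] at h1
    exact h1.congr (fun k => h2 k)
  have hlam_lim : Tendsto lam atTop (nhds lam0) := by
    have hmul : Tendsto (fun k => lam k * (inner ℝ (ι (u k)) (ι u0) : ℝ)) atTop
        (nhds (-(D1 u0 u0))) := by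
      have := hPSu0.sub (key1 u0)
      have heq : ∀ k, (D1 (u k) u0 + lam k * (inner ℝ (ι (u k)) (ι u0) : ℝ)) - D1 (u k) u0
          = lam k * (inner ℝ (ι (u k)) (ι u0) : ℝ) := fun k => by ring
      rw [zero_sub] at this
      exact this.congr heq
    have hdiv := hmul.div hinner0 (ne_of_gt hc)
    have hev : ∀ᶠ k in atTop, (lam k * (inner ℝ (ι (u k)) (ι u0) : ℝ))
        / (inner ℝ (ι (u k)) (ι u0) : ℝ) = lam k := by
      have hev2 : ∀ᶠ k in atTop, (inner ℝ (ι (u k)) (ι u0) : ℝ) > ‖ι u0‖^2 / 2 :=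
        hinner0.eventually (eventually_gt_nhds (by linarith))
      filter_upwards [hev2] with k hk
      have : (inner ℝ (ι (u k)) (ι u0) : ℝ) ≠ 0 := by
        have h0 : (0:ℝ) < ‖ι u0‖^2 / 2 := by linarith
        exact ne_of_gt (lt_trans h0 hk)
      field_simp
    rw [hlam0]
    exact hdiv.congr' hev
  -- uniform bounds
  obtain ⟨C, hCpos, hCbd⟩ : ∃ C : ℝ, 0 ≤ C ∧ ∀ n, ‖A (u n)‖ ≤ C := by
    have hbd_ww : ∀ w : E, ∃ C, ∀ k, ‖A (u k) w w‖ ≤ C := by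
      intro w
      obtain ⟨C, hC⟩ := (key2 w).norm.bddAbove_range
      exact ⟨C, fun k => hC (Set.mem_range_self k)⟩
    have hbd_wv : ∀ w v : E, ∃ C, ∀ k, ‖A (u k) w v‖ ≤ C := by
      intro w v
      obtain ⟨C1, h1⟩ := hbd_ww (w+v)
      obtain ⟨C2, h2⟩ := hbd_ww w
      obtain ⟨C3, h3⟩ := hbd_ww v
      refine ⟨(C1+C2+C3)/2, fun k => ?_⟩
      have hexp : A (u k) (w+v) (w+v) = A (u k) w w + 2 * A (u k) w v + A (u k) v v := by
        have hsym := hsymm (u k) v w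
        simp only [map_add, ContinuousLinearMap.add_apply]
        rw [← hsym]
        ring
      have h2x : (2:ℝ) * A (u k) w v
          = A (u k) (w+v) (w+v) - A (u k) w w - A (u k) v v := by
        rw [hexp]; ring
      have h4 : |(2:ℝ) * A (u k) w v| ≤ C1 + C2 + C3 := by
        rw [h2x]
        have e1 := h1 k
        have e2 := h2 k
        have e3 := h3 k
        rw [Real.norm_eq_abs] at e1 e2 e3
        calc |A (u k) (w+v) (w+v) - A (u k) w w - A (u k) v v|
            ≤ |A (u k) (w+v) (w+v) - A (u k) w w| + |A (u k) v v| := abs_sub _ _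
          _ ≤ |A (u k) (w+v) (w+v)| + |A (u k) w w| + |A (u k) v v| := by
              gcongr ?_ + _; exact abs_sub _ _
          _ ≤ C1 + C2 + C3 := by gcongr
      rw [abs_mul, abs_two] at h4
      rw [Real.norm_eq_abs]
      linarith [abs_nonneg (A (u k) w v)]
    have hbd_w : ∀ w : E, ∃ C, ∀ k, ‖A (u k) w‖ ≤ C := fun w =>
      banach_steinhaus (g := fun k => A (u k) w) (hbd_wv w)
    obtain ⟨C0, hC0⟩ := banach_steinhaus (g := fun k => A (u k)) hbd_w
    exact ⟨max C0 0, le_max_right _ _, fun k => (hC0 k).trans (le_max_left _ _)⟩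
  obtain ⟨Cl, hClpos, hClbd⟩ : ∃ Cl : ℝ, 0 ≤ Cl ∧ ∀ n, |lam n| ≤ Cl := by
    obtain ⟨Cl0, hCl0⟩ := hlam_lim.norm.bddAbove_range
    refine ⟨max Cl0 0, le_max_right _ _, fun k => ?_⟩
    have := hCl0 (Set.mem_range_self k)
    rw [Real.norm_eq_abs] at this
    exact this.trans (le_max_left _ _)
  -- the limiting quadratic form and negativity with margin on the compact sphere of W0
  set q : E → ℝ := fun v => A u0 v v + lam0 * ‖ι v‖^2 with hq
  have hqneg : ∀ v ∈ W0, v ≠ 0 → q v < 0 := by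
    intro v hv hv0
    have := hW2 v (hW0W hv) hv0
    rw [hbridge, real_inner_self_eq_norm_sq] at this
    rw [hq]
    simp only [hlam0]
    have harr : A u0 v v + -D1 u0 u0 / ‖ι u0‖ ^ 2 * ‖ι v‖ ^ 2
        = A u0 v v - D1 u0 u0 / ‖ι u0‖ ^ 2 * ‖ι v‖ ^ 2 := by ring
    rw [harr]
    exact this
  set K : Set E := {x | x ∈ W0 ∧ ‖x‖ = 1} with hK
  have hKcpt : IsCompact K := by
    have himg : K = Subtype.val '' (Metric.sphere (0 : W0) 1) := by
      ext x
      constructor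
      · rintro ⟨hx, hn1⟩
        refine ⟨⟨x, hx⟩, ?_, rfl⟩
        rw [mem_sphere_iff_norm, sub_zero]
        exact hn1
      · rintro ⟨y, hy, rfl⟩
        rw [mem_sphere_iff_norm, sub_zero] at hy
        exact ⟨y.2, hy⟩
    rw [himg]
    exact (isCompact_sphere (0:W0) 1).image continuous_subtype_val
  have hKne : K.Nonempty := by
    have hv0W0 : ((f 0 : E)) ∈ W0 := Submodule.subset_span ⟨0, rfl⟩
    have hv0ne : ((f 0 : E)) ≠ 0 := hfE.ne_zero 0
    exact ⟨‖(f 0 : E)‖⁻¹ • (f 0 : E), W0.smul_mem _ hv0W0, norm_smul_inv_norm hv0ne⟩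
  have hqcont : Continuous q := by
    apply Continuous.add
    · exact ((A u0).continuous).clm_apply continuous_id
    · exact continuous_const.mul ((ι.continuous.norm).pow 2)
  obtain ⟨θ, hθpos, hθ⟩ : ∃ θ : ℝ, 0 < θ ∧ ∀ v ∈ K, q v ≤ -θ := by
    obtain ⟨x0, hx0K, hx0max⟩ := hKcpt.exists_isMaxOn hKne hqcont.continuousOn
    have hx0ne : x0 ≠ 0 := by
      intro h
      have := hx0K.2
      rw [h, norm_zero] at this
      exact one_ne_zero this.symm
    have hq0 : q x0 < 0 := hqneg x0 hx0K.1 hx0ne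
    refine ⟨-(q x0), by linarith, fun v hv => ?_⟩
    rw [neg_neg]
    exact hx0max hv
  -- uniform convergence of the forms on K
  have unif1 : ∀ ε > (0:ℝ), ∀ᶠ n in atTop, ∀ v ∈ K,
      |(A (u n) v v + lam n * ‖ι v‖^2) - q v| < ε := by
    apply aux_unif hKcpt _ (2*C + 2*Cl + 2*‖A u0‖ + 2*|lam0|)
    · intro k x hx y hy
      have hx1 : ‖x‖ = 1 := hx.2
      have hy1 : ‖y‖ = 1 := hy.2
      have hιx : ‖ι x‖ ≤ 1 := (hιle x).trans_eq hx1
      have hιy : ‖ι y‖ ≤ 1 := (hιle y).trans_eq hy1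
      have hsub : ‖ι x - ι y‖ ≤ ‖x - y‖ := by rw [← map_sub]; exact hιle _
      have b1 : |A (u k) x x - A (u k) y y| ≤ C * ‖x-y‖ * 2 := by
        calc |A (u k) x x - A (u k) y y| ≤ ‖A (u k)‖ * ‖x-y‖ * (‖x‖+‖y‖) :=
              aux_bil_diff (A (u k)) x y
          _ = ‖A (u k)‖ * ‖x-y‖ * 2 := by rw [hx1, hy1]; ring
          _ ≤ C * ‖x-y‖ * 2 := by
              have := hCbd k
              have := norm_nonneg (x - y)
              nlinarith
      have b3 : |A u0 x x - A u0 y y| ≤ ‖A u0‖ * ‖x-y‖ * 2 := by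
        calc |A u0 x x - A u0 y y| ≤ ‖A u0‖ * ‖x-y‖ * (‖x‖+‖y‖) := aux_bil_diff (A u0) x y
          _ = ‖A u0‖ * ‖x-y‖ * 2 := by rw [hx1, hy1]; ring
      have hnsq : |‖ι x‖^2 - ‖ι y‖^2| ≤ ‖x - y‖ * 2 := by
        calc |‖ι x‖^2 - ‖ι y‖^2| ≤ ‖ι x - ι y‖ * (‖ι x‖ + ‖ι y‖) := aux_normsq_diff _ _
          _ ≤ ‖x - y‖ * 2 := by
              apply mul_le_mul hsub (by linarith) (by positivity) (norm_nonneg _)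
      have b2 : |lam k * ‖ι x‖^2 - lam k * ‖ι y‖^2| ≤ Cl * (‖x-y‖ * 2) := by
        rw [← mul_sub, abs_mul]
        exact mul_le_mul (hClbd k) hnsq (abs_nonneg _) hClpos
      have b4 : |lam0 * ‖ι x‖^2 - lam0 * ‖ι y‖^2| ≤ |lam0| * (‖x-y‖ * 2) := by
        rw [← mul_sub, abs_mul]
        exact mul_le_mul_of_nonneg_left hnsq (abs_nonneg _)
      have hdecomp : (A (u k) x x + lam k * ‖ι x‖^2 - q x)
          - (A (u k) y y + lam k * ‖ι y‖^2 - q y)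
          = (A (u k) x x - A (u k) y y) + (lam k * ‖ι x‖^2 - lam k * ‖ι y‖^2)
            - (A u0 x x - A u0 y y) - (lam0 * ‖ι x‖^2 - lam0 * ‖ι y‖^2) := by
        simp only [hq]
        ring
      rw [hdecomp]
      have habs : ∀ a b c d : ℝ, |a + b - c - d| ≤ |a| + |b| + |c| + |d| := by
        intro a b c d
        calc |a + b - c - d| ≤ |a + b - c| + |d| := abs_sub _ _
          _ ≤ |a + b| + |c| + |d| := by gcongr ?_ + _; exact abs_sub _ _
          _ ≤ |a| + |b| + |c| + |d| := by gcongr ?_ + _ + _; exact abs_add_le _ _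
      calc |(A (u k) x x - A (u k) y y) + (lam k * ‖ι x‖^2 - lam k * ‖ι y‖^2)
          - (A u0 x x - A u0 y y) - (lam0 * ‖ι x‖^2 - lam0 * ‖ι y‖^2)|
          ≤ |A (u k) x x - A (u k) y y| + |lam k * ‖ι x‖^2 - lam k * ‖ι y‖^2|
            + |A u0 x x - A u0 y y| + |lam0 * ‖ι x‖^2 - lam0 * ‖ι y‖^2| := habs _ _ _ _
        _ ≤ C * ‖x-y‖ * 2 + Cl * (‖x-y‖ * 2) + ‖A u0‖ * ‖x-y‖ * 2 + |lam0| * (‖x-y‖ * 2) :=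
            add_le_add (add_le_add (add_le_add b1 b2) b3) b4
        _ = (2*C + 2*Cl + 2*‖A u0‖ + 2*|lam0|) * ‖x - y‖ := by ring
    · intro x hx
      have h1 := (key2 x).add (hlam_lim.mul_const (‖ι x‖^2))
      have h2 := h1.sub_const (q x)
      have heq : A u0 x x + lam0 * ‖ι x‖^2 - q x = 0 := by
        simp [hq]
      rw [heq] at h2
      exact h2
  have unif2 : ∀ ε > (0:ℝ), ∀ᶠ n in atTop, ∀ v ∈ K, |(inner ℝ (ι (u n)) (ι v) : ℝ)| < ε := by
    apply aux_unif hKcpt _ M0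
    · intro k x hx y hy
      have heq : (inner ℝ (ι (u k)) (ι x) : ℝ) - (inner ℝ (ι (u k)) (ι y) : ℝ)
          = (inner ℝ (ι (u k)) (ι (x - y)) : ℝ) := by
        rw [map_sub, inner_sub_right]
      rw [heq]
      calc |(inner ℝ (ι (u k)) (ι (x - y)) : ℝ)| ≤ ‖ι (u k)‖ * ‖ι (x - y)‖ :=
            abs_real_inner_le_norm _ _
        _ ≤ M0 * ‖x - y‖ := by
            apply mul_le_mul ((hιle _).trans (hbdd k)) (hιle _) (norm_nonneg _) hM0pos.le
    · intro x hx
      have h1 := hweak ((innerSL ℝ (ι x)).comp ι)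
      simp only [ContinuousLinearMap.comp_apply, innerSL_apply_apply] at h1
      have h0 : (inner ℝ (ι x) (ι u0) : ℝ) = 0 := by
        rw [real_inner_comm]
        exact hW1 x (hW0W hx.1)
      rw [h0] at h1
      exact h1.congr (fun k => real_inner_comm _ _)
  -- choose n
  set τ : ℝ := min (1/(2*M0)) (θ / ((12*(C+Cl)+1) * M0)) with hτ
  have hτpos : 0 < τ := by
    apply lt_min
    · positivity
    · positivity
  have hτ1 : τ * M0 ≤ 1/2 := by
    have : τ ≤ 1/(2*M0) := min_le_left _ _
    rw [div_eq_mul_inv, mul_inv] at this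
    calc τ * M0 ≤ (1 * (2⁻¹ * M0⁻¹)) * M0 := by gcongr
      _ = 2⁻¹ * (M0⁻¹ * M0) := by ring
      _ = 1/2 := by rw [inv_mul_cancel₀ (ne_of_gt hM0pos)]; norm_num
  have hτ2 : 3 * (τ * M0) * (C + Cl) ≤ θ / 4 := by
    have h1 : τ ≤ θ / ((12*(C+Cl)+1) * M0) := min_le_right _ _
    have h2 : τ * ((12*(C+Cl)+1) * M0) ≤ θ := by
      rw [div_eq_mul_inv] at h1
      calc τ * ((12*(C+Cl)+1) * M0) ≤ (θ * ((12*(C+Cl)+1) * M0)⁻¹) * ((12*(C+Cl)+1) * M0) := by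
            gcongr
        _ = θ := by field_simp
    have h3 : τ*((12*(C+Cl)+1) * M0) = 12*((τ*M0)*(C+Cl)) + τ*M0 := by ring
    have h4 : 3 * (τ * M0) * (C + Cl) = 3*((τ*M0)*(C+Cl)) := by ring
    rw [h3] at h2
    rw [h4]
    have h5 : 0 ≤ (τ*M0)*(C+Cl) :=
      mul_nonneg (mul_nonneg hτpos.le hM0pos.le) (add_nonneg hCpos hClpos)
    have h6 : 0 ≤ τ*M0 := mul_nonneg hτpos.le hM0pos.le
    linarith
  obtain ⟨n, hn1, hn2, hn3⟩ : ∃ n, (∀ v ∈ K, |(A (u n) v v + lam n * ‖ι v‖^2) - q v| < θ/8)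
      ∧ (∀ v ∈ K, |(inner ℝ (ι (u n)) (ι v) : ℝ)| < τ * μ) ∧ ζ n < θ/16 := by
    have e1 := unif1 (θ/8) (by positivity)
    have e2 := unif2 (τ*μ) (by positivity)
    have e3 : ∀ᶠ n in atTop, ζ n < θ/16 := by
      have := (Metric.tendsto_atTop.1 hζ) (θ/16) (by positivity)
      obtain ⟨N, hN⟩ := this
      refine eventually_atTop.2 ⟨N, fun n hn => ?_⟩
      have := hN n hn
      rw [Real.dist_eq, sub_zero] at this
      exact lt_of_le_of_lt (le_abs_self _) this
    exact ((e1.and (e2.and e3)).exists).imp (fun n h => ⟨h.1, h.2.1, h.2.2⟩)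
  -- the projection onto the tangent space at u n
  set P : E →L[ℝ] E := ContinuousLinearMap.id ℝ E
    - (μ⁻¹ • ((innerSL ℝ (ι (u n))).comp ι)).smulRight (u n) with hP
  have hPapp : ∀ v, P v = v - (μ⁻¹ * (inner ℝ (ι (u n)) (ι v) : ℝ)) • (u n) := by
    intro v
    simp [hP, ContinuousLinearMap.smulRight_apply, ContinuousLinearMap.sub_apply,
      ContinuousLinearMap.smul_apply, smul_smul]
  have hPdist : ∀ v ∈ K, ‖P v - v‖ ≤ τ * M0 := by
    intro v hv
    rw [hPapp]
    have h1 : v - (μ⁻¹ * (inner ℝ (ι (u n)) (ι v) : ℝ)) • (u n) - v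
        = -((μ⁻¹ * (inner ℝ (ι (u n)) (ι v) : ℝ)) • (u n)) := by abel
    rw [h1, norm_neg, norm_smul]
    have h2 : |(inner ℝ (ι (u n)) (ι v) : ℝ)| < τ * μ := hn2 v hv
    have h3 : ‖μ⁻¹ * (inner ℝ (ι (u n)) (ι v) : ℝ)‖ ≤ τ := by
      rw [Real.norm_eq_abs, abs_mul, abs_of_nonneg (inv_nonneg.2 hμ.le)]
      calc μ⁻¹ * |(inner ℝ (ι (u n)) (ι v) : ℝ)| ≤ μ⁻¹ * (τ * μ) := by gcongr
        _ = τ := by field_simp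
    exact mul_le_mul h3 (hbdd n) (norm_nonneg _) hτpos.le
  -- W1 := P(W0)
  set g : W0 →ₗ[ℝ] E := P.toLinearMap ∘ₗ W0.subtype with hg
  have hginj : Function.Injective g := by
    apply (injective_iff_map_eq_zero g).mpr
    intro x hx0
    by_contra hne
    have hxe : (x : E) ≠ 0 := fun h => hne (Subtype.ext h)
    set v : E := ‖(x : E)‖⁻¹ • (x : E) with hvdef
    have hvK : v ∈ K := ⟨W0.smul_mem _ x.2, norm_smul_inv_norm hxe⟩
    have hPv : P v = 0 := by
      have hgx : P (x : E) = 0 := hx0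
      rw [hvdef, map_smul, hgx, smul_zero]
    have hd := hPdist v hvK
    rw [hPv, zero_sub, norm_neg, hvK.2] at hd
    linarith [hτ1]
  set W1 : Submodule ℝ E := LinearMap.range g with hW1def
  have hW1rank : Module.rank ℝ W1 = (M+1 : ℕ) := by
    rw [hW1def, ← (LinearEquiv.ofInjective g hginj).rank_eq]
    rw [← Module.finrank_eq_rank, hrank0]
  -- tangency
  have htang : ∀ φ ∈ W1, ⟪ι (u n), ι φ⟫ = 0 := by
    rintro φ ⟨v, rfl⟩
    have : g v = P (v : E) := rfl
    rw [this, hPapp]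
    rw [map_sub, map_smul, inner_sub_right, real_inner_smul_right]
    rw [real_inner_self_eq_norm_sq, hS n]
    field_simp; ring
  -- negativity
  have hnegW1 : ∀ φ ∈ W1, φ ≠ 0 →
      iteratedFDeriv ℝ 2 Φ (u n) ![φ, φ] + lam n * ‖ι φ‖ ^ 2 < -(ζ n) * ‖φ‖ ^ 2 := by
    intro φ hφ hφ0
    obtain ⟨v', rfl⟩ := hφ
    have hv'ne : (v' : E) ≠ 0 := by
      intro h
      apply hφ0
      have : v' = 0 := Subtype.ext h
      rw [this, map_zero]
    set s : ℝ := ‖(v' : E)‖ with hs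
    have hspos : 0 < s := norm_pos_iff.mpr hv'ne
    set v : E := s⁻¹ • (v' : E) with hvdef
    have hvK : v ∈ K := ⟨W0.smul_mem _ v'.2, norm_smul_inv_norm hv'ne⟩
    set ψ : E := P v with hψdef
    have hφeq : g v' = s • ψ := by
      rw [hψdef]
      show P (v' : E) = s • P v
      rw [hvdef, map_smul, smul_smul, mul_inv_cancel₀ (ne_of_gt hspos), one_smul]
    rw [hbridge, hφeq]
    have e1 : A (u n) (s • ψ) (s • ψ) = s^2 * (A (u n) ψ ψ) := by
      simp only [map_smul, ContinuousLinearMap.smul_apply, smul_eq_mul]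
      ring
    have e2 : ‖ι (s • ψ)‖^2 = s^2 * ‖ι ψ‖^2 := by
      rw [map_smul, norm_smul, mul_pow, Real.norm_eq_abs, sq_abs]
    have e3 : ‖s • ψ‖^2 = s^2 * ‖ψ‖^2 := by
      rw [norm_smul, mul_pow, Real.norm_eq_abs, sq_abs]
    rw [e1, e2, e3]
    -- the core estimate at the unit vector v
    have hv1 : ‖v‖ = 1 := hvK.2
    have hdist : ‖ψ - v‖ ≤ τ * M0 := hPdist v hvK
    have hrhalf : τ * M0 ≤ 1/2 := hτ1
    have hψn : ‖ψ‖ ≤ 1 + τ * M0 := by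
      calc ‖ψ‖ = ‖(ψ - v) + v‖ := by rw [sub_add_cancel]
        _ ≤ ‖ψ - v‖ + ‖v‖ := norm_add_le _ _
        _ ≤ τ * M0 + 1 := by rw [hv1]; gcongr
        _ = 1 + τ * M0 := by ring
    have hιψ : ‖ι ψ‖ ≤ 1 + τ * M0 := (hιle ψ).trans hψn
    have hιv : ‖ι v‖ ≤ 1 := (hιle v).trans_eq hv1
    have hsubι : ‖ι ψ - ι v‖ ≤ τ * M0 := by
      rw [← map_sub]
      exact (hιle _).trans hdist
    have b1 : |A (u n) ψ ψ - A (u n) v v| ≤ C * ((τ*M0) * (2 + τ*M0)) := by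
      calc |A (u n) ψ ψ - A (u n) v v| ≤ ‖A (u n)‖ * ‖ψ - v‖ * (‖ψ‖ + ‖v‖) :=
            aux_bil_diff (A (u n)) ψ v
        _ ≤ C * (τ*M0) * ((1 + τ*M0) + 1) := by
            have h6 : (0:ℝ) ≤ τ * M0 := mul_nonneg hτpos.le hM0pos.le
            apply mul_le_mul
            · exact mul_le_mul (hCbd n) hdist (norm_nonneg _) hCpos
            · rw [hv1]; gcongr
            · positivity
            · positivity
        _ = C * ((τ*M0) * (2 + τ*M0)) := by ring
    have b2 : |lam n * ‖ι ψ‖^2 - lam n * ‖ι v‖^2| ≤ Cl * ((τ*M0) * (2 + τ*M0)) := by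
      rw [← mul_sub, abs_mul]
      have h7 : |‖ι ψ‖^2 - ‖ι v‖^2| ≤ (τ*M0) * (2 + τ*M0) := by
        calc |‖ι ψ‖^2 - ‖ι v‖^2| ≤ ‖ι ψ - ι v‖ * (‖ι ψ‖ + ‖ι v‖) := aux_normsq_diff _ _
          _ ≤ (τ*M0) * ((1 + τ*M0) + 1) := by
              apply mul_le_mul hsubι (by linarith) (by positivity) (by positivity)
          _ = (τ*M0) * (2 + τ*M0) := by ring
      exact mul_le_mul (hClbd n) h7 (abs_nonneg _) hClpos
    have b3 : ζ n * ‖ψ‖^2 ≤ θ/16 * (3/2)^2 := by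
      apply mul_le_mul hn3.le _ (by positivity) (by linarith)
      calc ‖ψ‖^2 ≤ (1 + τ*M0)^2 := by
            apply pow_le_pow_left₀ (norm_nonneg _) hψn 2
        _ ≤ (3/2)^2 := by
            apply pow_le_pow_left₀ (by positivity) _ 2
            linarith
    have b4 : A (u n) v v + lam n * ‖ι v‖^2 ≤ -θ + θ/8 := by
      have h8 := hn1 v hvK
      have h9 := hθ v hvK
      have h10 := abs_lt.1 h8
      simp only [hq] at h9
      linarith [h10.2]
    have hcore : A (u n) ψ ψ + lam n * ‖ι ψ‖^2 + ζ n * ‖ψ‖^2 < 0 := by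
      have h6 : (0:ℝ) ≤ τ * M0 := mul_nonneg hτpos.le hM0pos.le
      have hb1' := abs_le.1 b1
      have hb2' := abs_le.1 b2
      have hkey : (C + Cl) * ((τ*M0) * (2 + τ*M0)) ≤ θ/4 := by
        have h11 : (τ*M0) * (2 + τ*M0) ≤ 3 * (τ*M0) :=
          aux_h11 (mul_nonneg hτpos.le hM0pos.le) hrhalf
        calc (C + Cl) * ((τ*M0) * (2 + τ*M0)) ≤ (C + Cl) * (3 * (τ*M0)) := by
              apply mul_le_mul_of_nonneg_left h11 (add_nonneg hCpos hClpos)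
          _ = 3 * (τ * M0) * (C + Cl) := by ring
          _ ≤ θ/4 := hτ2
      exact aux_combine hb1'.2 hb2'.2 b3 b4 hkey hθpos
    have hs2 : (0:ℝ) < s^2 := by positivity
    exact aux_scale hs2 hcore
  have := hMorse n W1 htang hnegW1
  rw [hW1rank] at this
  have : (M+1 : ℕ) ≤ M := by exact_mod_cast this
  omega
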